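/- arXiv:math/0609699 — 4 statements merged into one kernel-verified Lean document; each statement's English description precedes it below -/
import Mathlib

section
/- Let G be a finite p-group with a non-trivial proper subgroup H, and k a field of characteristic p. Let θ = ∑_g α_g g be a central element of kG with ∑_{h∈H} α_h ≠ 0. Then multiplication by θ on the induced module k_H↑^G = kG ⊗_{kH} k is not stably trivial, i.e., it does not factor through a projective kG-module. -/
/-- A map is stably trivial if it factors through a finitely generated free module. -/
def StablyTrivial (A : Type) [Ring A] {M N : Type} [AddCommGroup M] [AddCommGroup N]
    [Module A M] [Module A N] (f : M →ₗ[A] N) : Prop :=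
  ∃ (t : ℕ) (g : M →ₗ[A] (Fin t → A)) (h : (Fin t → A) →ₗ[A] N), h.comp g = f

/-- Left multiplication by a central element, as a linear endomorphism. -/
def mulBy (A M : Type) [Ring A] [AddCommGroup M] [Module A M]
    (θ : A) (hθ : ∀ b : A, θ * b = b * θ) : M →ₗ[A] M where
  toFun x := θ • x
  map_add' := smul_add θ
  map_smul' a x := by
    simp only [RingHom.id_apply]
    rw [← mul_smul, hθ a, mul_smul]

/-- The induced module `k_H↑^G = kG ⊗_{kH} k`, realized as the permutation
module `k[G/H]`. -/
noncomputable def IndTriv (k G : Type) [Field k] [Group G] (H : Subgroup G) : Type :=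
  (Representation.ofMulAction k G (G ⧸ H)).asModule

noncomputable instance (k G : Type) [Field k] [Group G] (H : Subgroup G) :
    AddCommGroup (IndTriv k G H) :=
  inferInstanceAs (AddCommGroup (MonoidAlgebra k (G ⧸ H)))

noncomputable instance (k G : Type) [Field k] [Group G] (H : Subgroup G) :
    Module (MonoidAlgebra k G) (IndTriv k G H) :=
  inferInstanceAs (Module (MonoidAlgebra k G)
    (Representation.ofMulAction k G (G ⧸ H)).asModule)

open MonoidAlgebra Finsupp

lemma exists_eq_norm_mul {k G : Type} [Field k] [Group G] [Fintype G]
    (H : Subgroup G) [Fintype H] (y : MonoidAlgebra k G)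
    (hy : ∀ σ : H, MonoidAlgebra.single (σ : G) (1 : k) * y = y) :
    ∃ z : MonoidAlgebra k G,
      (∑ σ : H, MonoidAlgebra.single (σ : G) (1 : k)) * z = y := by
  classical
  set r : G → G := fun g => (Quotient.mk (QuotientGroup.rightRel H) g).out with hr
  have hrel : ∀ g : G, g * (r g)⁻¹ ∈ H := by
    intro g
    exact (QuotientGroup.rightRel_apply).mp (Quotient.mk_out g)
  have hrinv : ∀ (σ : H) (g : G), r ((σ : G)⁻¹ * g) = r g := by
    intro σ g
    have h2 : g * ((σ : G)⁻¹ * g)⁻¹ = (σ : G) := by group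
    have : (Quotient.mk (QuotientGroup.rightRel H) ((σ : G)⁻¹ * g)) =
        Quotient.mk (QuotientGroup.rightRel H) g :=
      Quotient.sound (QuotientGroup.rightRel_apply.mpr (by rw [h2]; exact σ.2))
    exact congrArg Quotient.out this
  have hyinv : ∀ (σ : H) (g : G), y.coeff ((σ : G)⁻¹ * g) = y.coeff g := by
    intro σ g
    conv_rhs => rw [← hy σ]
    rw [MonoidAlgebra.coeff_single_mul_apply, one_mul]
  set z0 : MonoidAlgebra k G :=
    MonoidAlgebra.ofCoeff (Finsupp.equivFunOnFinite.symm (fun g => if r g = g then y.coeff g else 0)) with hz0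
  refine ⟨z0, ?_⟩
  ext g
  rw [Finset.sum_mul, MonoidAlgebra.coeff_sum, Finsupp.finset_sum_apply]
  have key : ∀ σ : H,
      (MonoidAlgebra.single (σ : G) (1 : k) * z0).coeff g
      = if σ = (⟨g * (r g)⁻¹, hrel g⟩ : H) then y.coeff g else 0 := by
    intro σ
    rw [MonoidAlgebra.coeff_single_mul_apply, one_mul]
    have hz0a : z0.coeff ((σ : G)⁻¹ * g) =
        if r ((σ:G)⁻¹ * g) = (σ:G)⁻¹ * g then y.coeff ((σ:G)⁻¹ * g) else 0 := rfl
    rw [hz0a, hrinv, hyinv]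
    congr 1
    simp only [eq_iff_iff, Subtype.ext_iff]
    constructor
    · intro h; rw [h]; group
    · intro h; rw [h]; group
  rw [Finset.sum_congr rfl (fun σ _ => key σ), Finset.sum_ite_eq' Finset.univ]
  simp

/-- if `θ = ∑ α_g g` is central in `kG` and `∑_{h ∈ H} α_h ≠ 0` for a
non-trivial proper subgroup `H` of the finite `p`-group `G`, then multiplication by `θ`
on `k_H↑^G` does not factor through a projective module. -/
theorem stmt5 (p : ℕ) [Fact p.Prime] (k : Type) [Field k] [CharP k p]
    (G : Type) [Group G] [Fintype G] (hG : IsPGroup p G)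
    (H : Subgroup G) [Fintype H] (hH1 : H ≠ ⊥) (hH2 : H ≠ ⊤)
    (θ : MonoidAlgebra k G) (hθc : ∀ b : MonoidAlgebra k G, θ * b = b * θ)
    (hsum : (∑ h : H, θ.coeff (h : G)) ≠ 0) :
    ¬ StablyTrivial (MonoidAlgebra k G)
        (mulBy (MonoidAlgebra k G) (IndTriv k G H) θ hθc) := by
  classical
  rintro ⟨t, g, h, hcomp⟩
  set ρ := Representation.ofMulAction k G (G ⧸ H) with hρ
  have hsmul : ∀ (a : MonoidAlgebra k G) (x : IndTriv k G H),
      a • x = ρ.asAlgebraHom a x := fun _ _ => rfl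
  set e : G ⧸ H := QuotientGroup.mk 1 with he
  set x₀ : IndTriv k G H := (MonoidAlgebra.single e 1 : MonoidAlgebra k (G ⧸ H)) with hx₀def
  have hx0' : (Representation.asModuleEquiv ρ) x₀ = MonoidAlgebra.single e 1 := rfl
  set ε : IndTriv k G H → k := fun v => ((Representation.asModuleEquiv ρ) v).coeff e with hε
  have hsmulE : ∀ a : G, a • e = e ↔ a ∈ H := by
    intro a
    rw [he]
    show (a • (QuotientGroup.mk (1:G) : G ⧸ H) = QuotientGroup.mk 1) ↔ _
    rw [MulAction.Quotient.smul_mk, QuotientGroup.eq]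
    simp
  -- H fixes x₀
  have hfix : ∀ σ : H, MonoidAlgebra.single (σ : G) (1 : k) • x₀ = x₀ := by
    intro σ
    rw [hsmul, Representation.asAlgebraHom_single_one, hρ]
    show Representation.ofMulAction k G (G ⧸ H) (σ : G) (MonoidAlgebra.single e 1) = _
    rw [Representation.ofMulAction_single]
    rw [hx₀def]
    congr 1
    exact (hsmulE _).mpr σ.2
  -- hence H fixes g x₀ in the free module
  have hyinv : ∀ σ : H,
      MonoidAlgebra.single (σ : G) (1 : k) • g x₀ = g x₀ := by
    intro σ; rw [← map_smul, hfix]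
  -- decompose g x₀ through the norm element
  have hcomp' : ∀ i : Fin t, ∃ z : MonoidAlgebra k G,
      (∑ σ : H, MonoidAlgebra.single (σ : G) (1 : k)) * z = g x₀ i := by
    intro i
    apply exists_eq_norm_mul
    intro σ
    have := congrFun (hyinv σ) i
    simpa [Pi.smul_apply, smul_eq_mul] using this
  choose z hz using hcomp'
  have hgz : (∑ σ : H, MonoidAlgebra.single (σ : G) (1 : k)) • z = g x₀ := by
    funext i
    rw [Pi.smul_apply, smul_eq_mul, hz]
  -- |H| = 0 in k
  have hcard : ((Fintype.card H : k)) = 0 := by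
    obtain ⟨n, hn⟩ := (IsPGroup.iff_card).mp (hG.to_subgroup H)
    have hn1 : n ≠ 0 := by
      rintro rfl
      exact hH1 (Subgroup.card_eq_one.mp (by simpa using hn))
    rw [← Nat.card_eq_fintype_card, hn]
    exact (CharP.cast_eq_zero_iff k p _).mpr (dvd_pow_self p hn1)
  -- ε (θ • x₀) = ∑_{h ∈ H} θ h
  have hev1 : ε (θ • x₀) = ∑ σ : H, θ.coeff (σ : G) := by
    show ((ρ.asAlgebraHom θ) ((Representation.asModuleEquiv ρ) x₀)).coeff e = _
    rw [hx0']
    have hθd : θ = ∑ a : G, MonoidAlgebra.single a (θ.coeff a) := by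
      ext b
      rw [MonoidAlgebra.coeff_sum, Finsupp.finset_sum_apply]
      simp [MonoidAlgebra.coeff_single, Finsupp.single_apply, Finset.sum_ite_eq']
    conv_lhs => rw [hθd]
    rw [map_sum, LinearMap.sum_apply, MonoidAlgebra.coeff_sum, Finsupp.finset_sum_apply]
    have key : ∀ a : G, ((ρ.asAlgebraHom (MonoidAlgebra.single a (θ.coeff a))) (MonoidAlgebra.single e 1)).coeff e
        = if a ∈ H then θ.coeff a else 0 := by
      intro a
      rw [Representation.asAlgebraHom_single, LinearMap.smul_apply, hρ,
        Representation.ofMulAction_single, MonoidAlgebra.coeff_smul_apply, MonoidAlgebra.coeff_single_apply]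
      by_cases hmem : a ∈ H
      · rw [if_pos ((hsmulE a).mpr hmem), if_pos hmem]; simp
      · rw [if_neg (fun hh => hmem ((hsmulE a).mp hh)), if_neg hmem]; simp
    rw [Finset.sum_congr rfl (fun a _ => key a), ← Finset.sum_filter]
    exact Finset.sum_subtype _ (fun x => by simp) (fun a => θ.coeff a)
  -- ε (norm • w) = 0 for any w
  have hev2 : ∀ w : IndTriv k G H,
      ε ((∑ σ : H, MonoidAlgebra.single (σ : G) (1 : k)) • w) = 0 := by
    intro w
    show ((ρ.asAlgebraHom (∑ σ : H, MonoidAlgebra.single (σ : G) (1 : k)))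
      ((Representation.asModuleEquiv ρ) w)).coeff e = 0
    rw [map_sum, LinearMap.sum_apply,
      MonoidAlgebra.coeff_sum, Finsupp.finset_sum_apply]
    have key : ∀ σ : H,
        ((ρ.asAlgebraHom (MonoidAlgebra.single (σ : G) (1:k)))
          ((Representation.asModuleEquiv ρ) w)).coeff e
        = ((Representation.asModuleEquiv ρ) w).coeff e := by
      intro σ
      rw [Representation.asAlgebraHom_single_one, hρ, Representation.coeff_ofMulAction]
      congr 1
      exact (hsmulE _).mpr (H.inv_mem σ.2)
    rw [Finset.sum_congr rfl (fun σ _ => key σ), Finset.sum_const, Finset.card_univ,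
      nsmul_eq_mul, hcard, zero_mul]
  -- put it together
  have hfin : ε (θ • x₀) = 0 := by
    have h1 : θ • x₀ = h (g x₀) := (LinearMap.congr_fun hcomp x₀).symm
    rw [h1, ← hgz, map_smul]
    exact hev2 (h z)
  rw [hev1] at hfin
  exact hsum hfin
end

section
/- Let G be a finite p-group and k a field of characteristic p with nilpotency index m of J(kG) (the least m with J(kG)^m = 0). Then for every projective-free kG-module M, one has J(kG)^{m-1} M = 0; i.e., the radical length of M is strictly less than m. -/
open MonoidAlgebra

/-- A module is projective-free if it has no nonzero projective direct summand. -/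
def ProjectiveFree (A M : Type) [Ring A] [AddCommGroup M] [Module A M] : Prop :=
  ∀ N N' : Submodule A M, IsCompl N N' → Module.Projective A N → N = ⊥

/-- The submodule `J • N` spanned by products `a • n` with `a ∈ J`, `n ∈ N`. -/
def idealSmul (A M : Type) [Ring A] [AddCommGroup M] [Module A M]
    (J : Ideal A) (N : Submodule A M) : Submodule A M :=
  Submodule.span A {x | ∃ a ∈ J, ∃ n ∈ N, x = a • n}

/-- The radical series `Rad^i M = J^i M`.  Applied to `M = A` itself this gives the
powers `J^i` of the ideal `J`. -/
def radSeries (A M : Type) [Ring A] [AddCommGroup M] [Module A M] (J : Ideal A) :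
    ℕ → Submodule A M
  | 0 => ⊤
  | (i+1) => idealSmul A M J (radSeries A M J i)

lemma mem_idealSmul_of (A M : Type) [Ring A] [AddCommGroup M] [Module A M]
    {J : Ideal A} {N : Submodule A M} {a : A} {n : M} (ha : a ∈ J) (hn : n ∈ N) :
    a • n ∈ idealSmul A M J N :=
  Submodule.subset_span ⟨a, ha, n, hn, rfl⟩

lemma idealSmul_assoc (A M : Type) [Ring A] [AddCommGroup M] [Module A M]
    (I K : Ideal A) (N : Submodule A M) :
    idealSmul A M I (idealSmul A M K N) = idealSmul A M (idealSmul A A I K) N := by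
  apply le_antisymm
  · rw [idealSmul, Submodule.span_le]
    rintro _ ⟨a, ha, n, hn, rfl⟩
    have key : ∀ n ∈ idealSmul A M K N, ∀ (c : A), ∀ a ∈ I,
        a • (c • n) ∈ idealSmul A M (idealSmul A A I K) N := by
      intro n hn
      induction hn using Submodule.span_induction with
      | mem x hx =>
          obtain ⟨b, hb, y, hy, rfl⟩ := hx
          intro c a ha
          rw [← mul_smul, ← mul_smul, mul_assoc]
          refine mem_idealSmul_of A M ?_ hy
          have hcb : c * b ∈ K := K.smul_mem c hb
          have : a • (c * b) ∈ idealSmul A A I K := mem_idealSmul_of A A ha hcb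
          simpa [smul_eq_mul, mul_assoc] using this
      | zero => intro c a _; rw [smul_zero, smul_zero]; exact Submodule.zero_mem _
      | add x y _ _ hx hy =>
          intro c a ha
          rw [smul_add, smul_add]
          exact Submodule.add_mem _ (hx c a ha) (hy c a ha)
      | smul d x _ hx =>
          intro c a ha
          rw [← mul_smul, ← mul_smul, mul_assoc, mul_smul]
          exact hx (c * d) a ha
    simpa using key n hn 1 a ha
  · rw [idealSmul, Submodule.span_le]
    rintro _ ⟨d, hd, x, hx, rfl⟩
    have key : ∀ d ∈ idealSmul A A I K, ∀ x ∈ N, d • x ∈ idealSmul A M I (idealSmul A M K N) := by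
      intro d hd
      induction hd using Submodule.span_induction with
      | mem e he =>
          obtain ⟨a, ha, b, hb, rfl⟩ := he
          intro x hx
          rw [smul_eq_mul, mul_smul]
          exact mem_idealSmul_of A M ha (mem_idealSmul_of A M hb hx)
      | zero => intro x _; rw [zero_smul]; exact Submodule.zero_mem _
      | add e f _ _ he hf =>
          intro x hx
          rw [add_smul]
          exact Submodule.add_mem _ (he x hx) (hf x hx)
      | smul c e _ he =>
          intro x hx
          rw [smul_eq_mul, mul_smul]
          exact Submodule.smul_mem _ c (he x hx)
    exact key d hd x hx

lemma idealSmul_top_top (A M : Type) [Ring A] [AddCommGroup M] [Module A M] :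
    idealSmul A M ⊤ ⊤ = ⊤ := by
  refine le_antisymm le_top ?_
  intro x _
  exact Submodule.subset_span ⟨1, trivial, x, trivial, (one_smul A x).symm⟩

lemma radSeries_eq (A M : Type) [Ring A] [AddCommGroup M] [Module A M] (J : Ideal A) :
    ∀ i, radSeries A M J i = idealSmul A M (radSeries A A J i) ⊤
  | 0 => by rw [radSeries, radSeries, idealSmul_top_top]
  | (i+1) => by
      rw [radSeries, radSeries, radSeries_eq A M J i, idealSmul_assoc]

lemma exists_fixed_vector (p : ℕ) [Fact p.Prime] (G : Type) [Group G] [Finite G]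
    (hG : IsPGroup p G) (S : Type) [AddCommGroup S] [Module (ZMod p) S]
    [DistribMulAction G S] (t : S) (ht : t ≠ 0) :
    ∃ s : S, s ≠ 0 ∧ ∀ g : G, g • s = s := by
  classical
  haveI : NeZero p := ⟨(Fact.out (p := p.Prime)).ne_zero⟩
  have hsc : ∀ (g : G) (c : ZMod p) (s : S), g • (c • s) = c • (g • s) := by
    intro g c s
    have hc : c = ((c.val : ℕ) : ZMod p) := by simp [ZMod.natCast_val, ZMod.cast_id]
    rw [hc, Nat.cast_smul_eq_nsmul, Nat.cast_smul_eq_nsmul]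
    exact (DistribMulAction.toAddMonoidHom S g).map_nsmul c.val s
  set W : Submodule (ZMod p) S := Submodule.span (ZMod p) (Set.range fun g : G => g • t) with hWdef
  have hWstable : ∀ (g : G) (w : S), w ∈ W → g • w ∈ W := by
    intro g w hw
    induction hw using Submodule.span_induction with
    | mem x hx => obtain ⟨h, rfl⟩ := hx; exact Submodule.subset_span ⟨g * h, by simp [mul_smul]⟩
    | zero => rw [smul_zero]; exact W.zero_mem
    | add x y _ _ hx hy => rw [smul_add]; exact W.add_mem hx hy
    | smul c x _ hx => rw [hsc]; exact W.smul_mem c hx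
  letI : MulAction G W :=
    { smul := fun g w => ⟨g • (w : S), hWstable g w w.2⟩
      one_smul := fun w => Subtype.ext (one_smul G (w : S))
      mul_smul := fun g h w => Subtype.ext (mul_smul g h (w : S)) }
  have hsmul_def : ∀ (g : G) (w : W), ((g • w : W) : S) = g • (w : S) := fun _ _ => rfl
  have htW : t ∈ W := Submodule.subset_span ⟨1, one_smul G t⟩
  haveI : Module.Finite (ZMod p) W := Module.Finite.span_of_finite _ (Set.finite_range _)
  haveI : Finite W := Module.finite_of_finite (ZMod p)
  haveI : Fintype W := Fintype.ofFinite W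
  haveI : Nontrivial W := ⟨⟨⟨t, htW⟩, 0, by simp [Subtype.ext_iff, ht]⟩⟩
  have h0 : (0 : W) ∈ MulAction.fixedPoints G W := by
    intro g
    exact Subtype.ext (by rw [hsmul_def]; exact smul_zero g)
  have hpcard : p ∣ Nat.card W := by
    rw [Nat.card_eq_fintype_card, Module.card_eq_pow_finrank (K := ZMod p) (V := W), ZMod.card]
    exact dvd_pow_self p Module.finrank_pos.ne'
  obtain ⟨b, hbfix, hb0⟩ :=
    hG.exists_fixed_point_of_prime_dvd_card_of_fixed_point (α := W) hpcard h0
  refine ⟨(b : S), ?_, fun g => ?_⟩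
  · intro h
    exact hb0 (Subtype.ext h.symm)
  · rw [← hsmul_def g b, hbfix g]

/-- every `b : kG` acts on a `G`-fixed vector by its augmentation -/
lemma smul_fixed_eq (k : Type) [Field k] (G : Type) [Group G]
    (S : Type) [AddCommGroup S] [Module (MonoidAlgebra k G) S]
    (s : S) (hs : ∀ g : G, (of k G g : MonoidAlgebra k G) • s = s) (b : MonoidAlgebra k G) :
    b • s = (algebraMap k (MonoidAlgebra k G) ((MonoidAlgebra.lift k k G 1) b)) • s := by
  induction b using MonoidAlgebra.induction_on with
  | of g =>
      rw [hs g]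
      have : (algebraMap k (MonoidAlgebra k G)) ((MonoidAlgebra.lift k k G 1) ((of k G) g)) = 1 := by
        simp [← MonoidAlgebra.one_def]
      rw [this, one_smul]
  | add a b ha hb => rw [add_smul, ha, hb, map_add, map_add, add_smul]
  | smul r a ha =>
      rw [Algebra.smul_def r a, mul_smul, ha, ← mul_smul, ← map_mul]
      congr 1
      simp [map_mul, AlgHom.commutes]

lemma sub_one_mem_jacobson (p : ℕ) [Fact p.Prime] (k : Type) [Field k] [CharP k p]
    (G : Type) [Group G] [Fintype G] (hG : IsPGroup p G) (g : G) :
    (of k G g : MonoidAlgebra k G) - 1 ∈ Ideal.jacobson (⊥ : Ideal (MonoidAlgebra k G)) := by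
  classical
  haveI : NeZero p := ⟨(Fact.out (p := p.Prime)).ne_zero⟩
  rw [Ideal.jacobson]
  refine Submodule.mem_sInf.2 ?_
  rintro L ⟨-, hL⟩
  letI S := (MonoidAlgebra k G) ⧸ L
  letI : DistribMulAction G S := DistribMulAction.compHom S (of k G)
  letI : Module (ZMod p) S := AddCommGroup.zmodModule (by
    intro x
    have h1 : ((p : ℕ) : MonoidAlgebra k G) = 0 := by
      rw [← map_natCast (algebraMap k (MonoidAlgebra k G)) p, CharP.cast_eq_zero k p, map_zero]
    calc p • x = ((p : ℕ) : MonoidAlgebra k G) • x := (Nat.cast_smul_eq_nsmul _ _ _).symm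
    _ = 0 := by rw [h1, zero_smul])
  have ht : (Submodule.Quotient.mk 1 : S) ≠ 0 := by
    rw [Ne, Submodule.Quotient.mk_eq_zero]
    intro h1
    exact hL.ne_top ((Ideal.eq_top_iff_one L).2 h1)
  obtain ⟨s, hs0, hsfix⟩ := exists_fixed_vector p G hG S _ ht
  have hfix : ∀ g : G, (of k G g : MonoidAlgebra k G) • s = s := hsfix
  haveI : IsSimpleModule (MonoidAlgebra k G) S := isSimpleModule_iff_isCoatom.mpr hL.out
  have hspan : Submodule.span (MonoidAlgebra k G) {s} = ⊤ := by
    rcases eq_bot_or_eq_top (Submodule.span (MonoidAlgebra k G) {s}) with h | h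
    · exact absurd (h ▸ Submodule.mem_span_singleton_self s) (by simp [hs0])
    · exact h
  have hmk : (Submodule.Quotient.mk 1 : S) ∈ Submodule.span (MonoidAlgebra k G) {s} := by
    rw [hspan]; trivial
  obtain ⟨a, ha⟩ := Submodule.mem_span_singleton.1 hmk
  have hkey := smul_fixed_eq k G S s hfix
  have h2 : ((of k G g : MonoidAlgebra k G) - 1) • (Submodule.Quotient.mk 1 : S) = 0 := by
    rw [← ha, ← mul_smul, hkey (((of k G g : MonoidAlgebra k G) - 1) * a), map_mul]
    have : (MonoidAlgebra.lift k k G 1) ((of k G g : MonoidAlgebra k G) - 1) = 0 := by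
      simp
    rw [this, zero_mul, map_zero, zero_smul]
  rw [← Submodule.Quotient.mk_smul, smul_eq_mul, mul_one, Submodule.Quotient.mk_eq_zero] at h2
  exact h2

lemma aug_mem_jacobson (p : ℕ) [Fact p.Prime] (k : Type) [Field k] [CharP k p]
    (G : Type) [Group G] [Fintype G] (hG : IsPGroup p G) (b : MonoidAlgebra k G)
    (hb : (MonoidAlgebra.lift k k G 1) b = 0) :
    b ∈ Ideal.jacobson (⊥ : Ideal (MonoidAlgebra k G)) := by
  classical
  have hε : ∀ b : MonoidAlgebra k G, (MonoidAlgebra.lift k k G 1) b = ∑ g : G, b.coeff g := by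
    intro b
    rw [MonoidAlgebra.lift_apply, Finsupp.sum_fintype _ _ (by simp)]
    simp
  have hdecomp : ∑ g : G, (b.coeff g) • ((of k G g : MonoidAlgebra k G) - 1) = b := by
    simp only [smul_sub]
    rw [Finset.sum_sub_distrib]
    have h1 : ∑ g : G, (b.coeff g) • (of k G g : MonoidAlgebra k G) = b := by
      have h0 : ∀ g : G, (b.coeff g) • (of k G g : MonoidAlgebra k G)
          = MonoidAlgebra.single g (b.coeff g) := by
        intro g
        rw [MonoidAlgebra.of_apply, MonoidAlgebra.smul_single', mul_one]
      rw [Finset.sum_congr rfl fun g _ => h0 g]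
      ext1; rw [MonoidAlgebra.coeff_sum]; simp only [MonoidAlgebra.coeff_single]
      exact Finsupp.univ_sum_single _
    have h2 : ∑ g : G, (b.coeff g) • (1 : MonoidAlgebra k G) = 0 := by
      rw [← Finset.sum_smul, ← hε b, hb, zero_smul]
    rw [h1, h2, sub_zero]
  rw [← hdecomp]
  refine Submodule.sum_mem _ fun g _ => ?_
  rw [Algebra.smul_def]
  exact Ideal.mul_mem_left _ _ (sub_one_mem_jacobson p k G hG g)

lemma sigma_smul_eq_zero (p : ℕ) [Fact p.Prime] (k : Type) [Field k] [CharP k p]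
    (G : Type) [Group G] [Fintype G] (hG : IsPGroup p G) (m : ℕ)
    (hm : radSeries (MonoidAlgebra k G) (MonoidAlgebra k G)
        (Ideal.jacobson (⊥ : Ideal (MonoidAlgebra k G))) m = ⊥)
    (M : Type) [AddCommGroup M] [Module (MonoidAlgebra k G) M]
    (hM : ProjectiveFree (MonoidAlgebra k G) M) (x : M) :
    (∑ g : G, of k G g : MonoidAlgebra k G) • x = 0 := by
  classical
  by_contra hx
  set A := MonoidAlgebra k G with hA
  set J := Ideal.jacobson (⊥ : Ideal A) with hJdef
  letI : Module k M := Module.compHom M (algebraMap k A)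
  have hksmul : ∀ (c : k) (y : M), c • y = (algebraMap k A c) • y := fun _ _ => rfl
  obtain ⟨f0, hf0⟩ : ∃ f : Module.Dual k M, f ((∑ g : G, of k G g : A) • x) ≠ 0 := by
    by_contra h
    push_neg at h
    exact hx ((Module.forall_dual_apply_eq_zero_iff k _).1 h)
  set c0 := f0 ((∑ g : G, of k G g : A) • x) with hc0
  set f : Module.Dual k M := c0⁻¹ • f0 with hf
  have hfval : f ((∑ g : G, of k G g : A) • x) = 1 := by
    rw [hf]
    simp only [LinearMap.smul_apply, smul_eq_mul, ← hc0]
    exact inv_mul_cancel₀ hf0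
  set ψ₀ : M → A := fun y => ∑ g : G, MonoidAlgebra.single g⁻¹ (f ((of k G g : A) • y)) with hψ₀
  have hψadd : ∀ y z, ψ₀ (y + z) = ψ₀ y + ψ₀ z := by
    intro y z
    rw [hψ₀]
    simp only [smul_add, map_add]
    rw [← Finset.sum_add_distrib]
    refine Finset.sum_congr rfl fun g _ => ?_
    rw [MonoidAlgebra.single_add]
  have hψk : ∀ (r : k) (y : M), ψ₀ (r • y) = r • ψ₀ y := by
    intro r y
    rw [hψ₀]
    simp only
    rw [Finset.smul_sum]
    refine Finset.sum_congr rfl fun g _ => ?_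
    have h1 : (of k G g : A) • (r • y) = r • ((of k G g : A) • y) := by
      rw [hksmul, hksmul, ← mul_smul, ← mul_smul, Algebra.commutes]
    rw [h1, map_smul, smul_eq_mul, MonoidAlgebra.smul_single']
  have hψA : ∀ (a : A) (y : M), ψ₀ (a • y) = a * ψ₀ y := by
    intro a y
    induction a using MonoidAlgebra.induction_on with
    | of h =>
        rw [hψ₀]
        simp only
        rw [Finset.mul_sum]
        refine Fintype.sum_equiv (Equiv.mulRight h) _ _ ?_
        intro g
        have e1 : (of k G (g * h) : A) • y = (of k G g : A) • ((of k G h : A) • y) := by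
          rw [map_mul, mul_smul]
        simp only [Equiv.coe_mulRight]
        rw [e1, show (of k G h : A) = MonoidAlgebra.single h 1 from rfl,
          MonoidAlgebra.single_mul_single, one_mul]
        congr 1
        simp [mul_inv_rev, ← mul_assoc]
    | add a b ha hb => rw [add_smul, hψadd, ha, hb, add_mul]
    | smul r a ha =>
        have h1 : (r • a) • y = r • (a • y) := by
          rw [hksmul, Algebra.smul_def, mul_smul]
        rw [h1, hψk, ha, smul_mul_assoc]
  set u : A := ψ₀ x with hu
  set ε : MonoidAlgebra k G →ₐ[k] k := MonoidAlgebra.lift k k G 1 with hεdef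
  have hεu : ε u = 1 := by
    rw [hu, hψ₀]
    simp only [map_sum]
    have h1 : ∀ g : G, ε (MonoidAlgebra.single g⁻¹ (f ((of k G g : A) • x)))
        = f ((of k G g : A) • x) := by
      intro g
      rw [hεdef, MonoidAlgebra.lift_single]
      simp
    rw [Finset.sum_congr rfl fun g _ => h1 g, ← map_sum]
    have h2 : ∑ g : G, (of k G g : A) • x = (∑ g : G, of k G g : A) • x := by
      rw [Finset.sum_smul]
    rw [h2, hfval]
  set v : A := u - 1 with hv
  have hεv : ε v = 0 := by rw [hv, map_sub, hεu, map_one, sub_self]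
  have hvJ : v ∈ J := aug_mem_jacobson p k G hG v hεv
  have hvpow : ∀ i, v ^ i ∈ radSeries A A J i := by
    intro i
    induction i with
    | zero => rw [pow_zero]; exact Submodule.mem_top
    | succ i ih =>
        rw [pow_succ']
        show (v * v ^ i) ∈ radSeries A A J (i+1)
        rw [radSeries, ← smul_eq_mul]
        exact mem_idealSmul_of A A hvJ ih
  have hvnil : IsNilpotent v := by
    refine ⟨m, ?_⟩
    have := hvpow m
    rw [hm] at this
    simpa using this
  have huu : IsUnit u := by
    have h3 := hvnil.isUnit_one_add
    rwa [hv, add_sub_cancel] at h3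
  obtain ⟨w, hw⟩ := huu
  set φ : A →ₗ[A] M := LinearMap.toSpanSingleton A M x with hφ
  set ψ : M →ₗ[A] A :=
    { toFun := fun y => ψ₀ y * ↑w⁻¹
      map_add' := fun y z => by
        show ψ₀ (y + z) * ↑w⁻¹ = ψ₀ y * ↑w⁻¹ + ψ₀ z * ↑w⁻¹
        rw [hψadd, add_mul]
      map_smul' := fun a y => by
        show ψ₀ (a • y) * ↑w⁻¹ = a • (ψ₀ y * ↑w⁻¹)
        rw [smul_eq_mul, hψA, mul_assoc] } with hψdef
  have hcomp : ∀ a : A, ψ (φ a) = a := by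
    intro a
    show ψ₀ (a • x) * ↑w⁻¹ = a
    rw [hψA, ← hu, mul_assoc, ← hw, Units.mul_inv, mul_one]
  set N := LinearMap.range φ with hN
  have hmemN : ∀ y : M, (φ.comp ψ) y ∈ N := fun y => ⟨ψ y, rfl⟩
  set pr : M →ₗ[A] N := (φ.comp ψ).codRestrict N hmemN with hpr
  have hprid : ∀ z : N, pr z = z := by
    rintro ⟨z, a, rfl⟩
    apply Subtype.ext
    show φ (ψ (φ a)) = φ a
    rw [hcomp]
  have hcompl : IsCompl N (LinearMap.ker pr) := LinearMap.isCompl_of_proj hprid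
  have hinj : Function.Injective φ := by
    intro a b hab
    have h4 : ψ (φ a) = ψ (φ b) := by rw [hab]
    rwa [hcomp, hcomp] at h4
  haveI hprojN : Module.Projective A N :=
    Module.Projective.of_equiv (LinearEquiv.ofInjective φ hinj)
  have hNbot := hM N _ hcompl hprojN
  have hxN : x ∈ N := ⟨1, by simp [hφ]⟩
  rw [hNbot] at hxN
  have hx0 : x = 0 := hxN
  exact hx (by rw [hx0, smul_zero])

/-- if `m` is the nilpotency index of `J(kG)` (the least `m` with
`J(kG)^m = 0`), then `J(kG)^{m-1} M = 0` for every projective-free `kG`-module `M`. -/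
theorem stmt10 (p : ℕ) [Fact p.Prime] (k : Type) [Field k] [CharP k p]
    (G : Type) [Group G] [Fintype G] (hG : IsPGroup p G)
    (m : ℕ)
    (hm : radSeries (MonoidAlgebra k G) (MonoidAlgebra k G)
        (Ideal.jacobson (⊥ : Ideal (MonoidAlgebra k G))) m = ⊥)
    (hmin : ∀ i < m, radSeries (MonoidAlgebra k G) (MonoidAlgebra k G)
        (Ideal.jacobson (⊥ : Ideal (MonoidAlgebra k G))) i ≠ ⊥)
    (M : Type) [AddCommGroup M] [Module (MonoidAlgebra k G) M]
    (hM : ProjectiveFree (MonoidAlgebra k G) M) :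
    radSeries (MonoidAlgebra k G) M
      (Ideal.jacobson (⊥ : Ideal (MonoidAlgebra k G))) (m - 1) = ⊥ := by
  classical
  cases m with
  | zero =>
      exfalso
      rw [radSeries] at hm
      have h1 : (1 : MonoidAlgebra k G) ∈ (⊥ : Submodule (MonoidAlgebra k G) (MonoidAlgebra k G)) :=
        hm ▸ Submodule.mem_top
      have h1' : (1 : MonoidAlgebra k G) = 0 := h1
      exact one_ne_zero h1'
  | succ n =>
      simp only [Nat.add_sub_cancel]
      set A := MonoidAlgebra k G with hA
      set J := Ideal.jacobson (⊥ : Ideal A) with hJdef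
      have hσM : ∀ x : M, (∑ g : G, of k G g : A) • x = 0 :=
        sigma_smul_eq_zero p k G hG (n+1) hm M hM
      have hstruct : ∀ a ∈ radSeries A A J n, ∃ c : k, a = c • (∑ g : G, of k G g : A) := by
        intro a ha
        have hfix : ∀ g : G, (of k G g : A) * a = a := by
          intro g
          have h1 : ((of k G g : A) - 1) • a ∈ radSeries A A J (n+1) := by
            rw [radSeries]
            exact mem_idealSmul_of A A (sub_one_mem_jacobson p k G hG g) ha
          rw [hm] at h1
          have h2 : ((of k G g : A) - 1) * a = 0 := h1
          rw [sub_mul, one_mul, sub_eq_zero] at h2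
          exact h2
        have hconst : ∀ h : G, a.coeff h = a.coeff 1 := by
          intro h
          have h3 := hfix h
          have h4 : ((of k G h : A) * a).coeff h = a.coeff h := by rw [h3]
          rw [MonoidAlgebra.of_apply, MonoidAlgebra.coeff_single_mul_apply, one_mul,
            inv_mul_cancel] at h4
          exact h4.symm
        refine ⟨a.coeff 1, ?_⟩
        ext h
        rw [MonoidAlgebra.coeff_smul_apply]
        have hσh : (∑ g : G, of k G g : A).coeff h = 1 := by
          rw [MonoidAlgebra.coeff_sum, Finset.sum_apply']
          simp only [MonoidAlgebra.of_apply, MonoidAlgebra.coeff_single, Finsupp.single_apply]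
          rw [Finset.sum_ite_eq' Finset.univ h (fun _ => (1:k))]
          simp
        rw [hσh, smul_eq_mul, mul_one, hconst h]
      rw [radSeries_eq A M J n]
      refine le_bot_iff.1 ?_
      rw [idealSmul, Submodule.span_le]
      rintro _ ⟨a, ha, y, -, rfl⟩
      obtain ⟨c, rfl⟩ := hstruct a ha
      simp only [SetLike.mem_coe, Submodule.mem_bot]
      rw [Algebra.smul_def, mul_smul, hσM y, smul_zero]
end

section
/- Let G be a finite p-group, k a field of characteristic p, and suppose f : M → A and g : A → B are kG-module maps between finite-dimensional modules which are ghosts (induce zero on Hom_stable(Ω^i k, -) for all i). If M fits in a short exact sequence 0 → P → M → Q → 0 where P and Q are finite direct sums of modules of the form Ω̃^i k (Heller shifts of the trivial module), then the composite g∘f is stably trivial (factors through a projective). -/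
/-- The trivial representation: `k` with `G` acting trivially (via the augmentation). -/
def kTriv (k G : Type) : Type := k

instance (k G : Type) [Field k] [Group G] : AddCommGroup (kTriv k G) :=
  inferInstanceAs (AddCommGroup k)

noncomputable instance (k G : Type) [Field k] [Group G] :
    Module (MonoidAlgebra k G) (kTriv k G) :=
  Module.compHom k ((MonoidAlgebra.lift k k G) 1).toRingHom

/-- `K` is an `n`-th syzygy `Ω^n k` of the trivial module: there is an exact free
resolution `⋯ → F_1 → F_0 → k → 0` with `K ≅ ker (F_{n-1} → F_{n-2})`. -/
def IsSyzygyOfTrivial (k G : Type) [Field k] [Group G] (n : ℕ)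
    (K : Type) [AddCommGroup K] [Module (MonoidAlgebra k G) K] : Prop :=
  ∃ (r : ℕ → ℕ)
    (d : ∀ i : ℕ, (Fin (r (i+1)) → MonoidAlgebra k G) →ₗ[MonoidAlgebra k G]
        (Fin (r i) → MonoidAlgebra k G))
    (ε : (Fin (r 0) → MonoidAlgebra k G) →ₗ[MonoidAlgebra k G] kTriv k G),
    Function.Surjective ε ∧
    LinearMap.range (d 0) = LinearMap.ker ε ∧
    (∀ i, LinearMap.range (d (i+1)) = LinearMap.ker (d i)) ∧
    Nonempty (K ≃ₗ[MonoidAlgebra k G] LinearMap.ker (d (n-1)))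

/-- `K` is an `n`-th cosyzygy `Ω^{-n} k` of the trivial module: there is an exact free
resolution `⋯ → F_1 → F_0 → K → 0` whose `n`-th kernel is, up to a free summand,
the trivial module. -/
def IsCosyzygyOfTrivial (k G : Type) [Field k] [Group G] (n : ℕ)
    (K : Type) [AddCommGroup K] [Module (MonoidAlgebra k G) K] : Prop :=
  ∃ (r : ℕ → ℕ)
    (d : ∀ i : ℕ, (Fin (r (i+1)) → MonoidAlgebra k G) →ₗ[MonoidAlgebra k G]
        (Fin (r i) → MonoidAlgebra k G))
    (π : (Fin (r 0) → MonoidAlgebra k G) →ₗ[MonoidAlgebra k G] K) (s : ℕ),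
    Function.Surjective π ∧
    LinearMap.range (d 0) = LinearMap.ker π ∧
    (∀ i, LinearMap.range (d (i+1)) = LinearMap.ker (d i)) ∧
    Nonempty ((kTriv k G × (Fin s → MonoidAlgebra k G)) ≃ₗ[MonoidAlgebra k G]
      LinearMap.ker (d (n-1)))

/-- `K` is a representative of the suspension `Ω^d k` of the trivial module
in the stable module category. -/
def IsSuspensionOfTrivial (k G : Type) [Field k] [Group G] (d : ℤ)
    (K : Type) [AddCommGroup K] [Module (MonoidAlgebra k G) K] : Prop :=
  (d = 0 ∧ ∃ s : ℕ, Nonempty (K ≃ₗ[MonoidAlgebra k G]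
      (kTriv k G × (Fin s → MonoidAlgebra k G)))) ∨
  (∃ n : ℕ, 0 < n ∧ d = (n : ℤ) ∧ IsSyzygyOfTrivial k G n K) ∨
  (∃ n : ℕ, 0 < n ∧ d = -(n : ℤ) ∧ IsCosyzygyOfTrivial k G n K)

/-- `f` is a ghost: it induces the zero map on `Hom_stable(Ω^d k, -)` (equivalently on
Tate cohomology `Ĥ^{-d}(G,-)`) for all `d ∈ ℤ`. -/
def IsGhost (k G : Type) [Field k] [Group G] {M N : Type} [AddCommGroup M]
    [AddCommGroup N] [Module (MonoidAlgebra k G) M] [Module (MonoidAlgebra k G) N]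
    (f : M →ₗ[MonoidAlgebra k G] N) : Prop :=
  ∀ (d : ℤ) (K : Type) [AddCommGroup K] [Module (MonoidAlgebra k G) K],
    IsSuspensionOfTrivial k G d K →
      ∀ φ : K →ₗ[MonoidAlgebra k G] M, StablyTrivial (MonoidAlgebra k G) (f.comp φ)

/-- `f` is a dual ghost: it induces the zero map on `Hom_stable(-, Ω^d k)` for all `d`. -/
def IsDualGhost (k G : Type) [Field k] [Group G] {M N : Type} [AddCommGroup M]
    [AddCommGroup N] [Module (MonoidAlgebra k G) M] [Module (MonoidAlgebra k G) N]
    (f : M →ₗ[MonoidAlgebra k G] N) : Prop :=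
  ∀ (d : ℤ) (K : Type) [AddCommGroup K] [Module (MonoidAlgebra k G) K],
    IsSuspensionOfTrivial k G d K →
      ∀ ψ : N →ₗ[MonoidAlgebra k G] K, StablyTrivial (MonoidAlgebra k G) (ψ.comp f)

set_option linter.unusedSectionVars false

section ST
variable {A : Type} [Ring A] {M N P : Type} [AddCommGroup M] [AddCommGroup N]
  [AddCommGroup P] [Module A M] [Module A N] [Module A P]

lemma st_zero : StablyTrivial A (0 : M →ₗ[A] N) :=
  ⟨0, 0, 0, by ext x; simp⟩

lemma st_comp_left (u : N →ₗ[A] P) {f : M →ₗ[A] N} (hf : StablyTrivial A f) :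
    StablyTrivial A (u.comp f) := by
  obtain ⟨t, e, h, rfl⟩ := hf
  exact ⟨t, e, u.comp h, by rw [LinearMap.comp_assoc]⟩

lemma st_comp_right {f : M →ₗ[A] N} (hf : StablyTrivial A f) (v : P →ₗ[A] M) :
    StablyTrivial A (f.comp v) := by
  obtain ⟨t, e, h, rfl⟩ := hf
  exact ⟨t, e.comp v, h, by rw [LinearMap.comp_assoc]⟩

lemma st_add {f₁ f₂ : M →ₗ[A] N} (h₁ : StablyTrivial A f₁) (h₂ : StablyTrivial A f₂) :
    StablyTrivial A (f₁ + f₂) := by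
  obtain ⟨t₁, e₁, h₁, rfl⟩ := h₁
  obtain ⟨t₂, e₂, h₂, rfl⟩ := h₂
  let Eq : (Fin (t₁ + t₂) → A) ≃ₗ[A] (Fin t₁ → A) × (Fin t₂ → A) :=
    (LinearEquiv.funCongrLeft A A finSumFinEquiv).trans
      (LinearEquiv.sumArrowLequivProdArrow _ _ A A)
  refine ⟨t₁ + t₂, (Eq.symm : _ →ₗ[A] _).comp (e₁.prod e₂),
    (h₁.comp (LinearMap.fst A _ _) + h₂.comp (LinearMap.snd A _ _)).comp
      (Eq : _ →ₗ[A] _), ?_⟩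
  ext x
  simp [Eq.apply_symm_apply]

lemma st_sum {ι : Type} (s : Finset ι) (F : ι → (M →ₗ[A] N))
    (h : ∀ i ∈ s, StablyTrivial A (F i)) : StablyTrivial A (∑ i ∈ s, F i) :=
  Finset.sum_induction F (StablyTrivial A) (fun _ _ => st_add) st_zero h

lemma st_from_pi {m : ℕ} {K : Fin m → Type} [∀ i, AddCommGroup (K i)]
    [∀ i, Module A (K i)] (u : (∀ i, K i) →ₗ[A] N)
    (h : ∀ i, StablyTrivial A (u.comp (LinearMap.single A K i))) :
    StablyTrivial A u := by
  have hu : u = ∑ i : Fin m, (u.comp (LinearMap.single A K i)).comp (LinearMap.proj i) := by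
    ext x
    simp only [LinearMap.sum_apply, LinearMap.comp_apply, LinearMap.proj_apply,
      LinearMap.coe_single]
    rw [← map_sum, Finset.univ_sum_single]
  rw [hu]
  exact st_sum _ _ (fun i _ => st_comp_right (h i) _)

end ST

section Factor
variable {A : Type} [Ring A] {M N Q : Type} [AddCommGroup M] [AddCommGroup N]
  [AddCommGroup Q] [Module A M] [Module A N] [Module A Q]

lemma factor_through_surjective (π : M →ₗ[A] Q) (hπ : Function.Surjective π)
    (D : M →ₗ[A] N) (h : LinearMap.ker π ≤ LinearMap.ker D) :
    ∃ D' : Q →ₗ[A] N, D'.comp π = D := by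
  let eq := π.quotKerEquivOfSurjective hπ
  refine ⟨((LinearMap.ker π).liftQ D h).comp (eq.symm : Q →ₗ[A] _), ?_⟩
  ext x
  have h1 : eq.symm (π x) = Submodule.Quotient.mk x := by
    rw [LinearEquiv.symm_apply_eq]
    rfl
  simp only [LinearMap.comp_apply, LinearEquiv.coe_coe, h1, Submodule.liftQ_apply]

end Factor


open MonoidAlgebra

section Ext
variable {k G : Type} [Field k] [Group G] [Fintype G]

variable {P M : Type} [AddCommGroup P] [AddCommGroup M]
  [Module (MonoidAlgebra k G) P] [Module (MonoidAlgebra k G) M]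
  [Module k M] [IsScalarTower k (MonoidAlgebra k G) M]

lemma sum_single_apply_eq (a : MonoidAlgebra k G) :
    ∑ g : G, MonoidAlgebra.single g (a.coeff g) = a := by
  classical
  apply MonoidAlgebra.coeff_injective
  ext g'
  rw [MonoidAlgebra.coeff_sum, Finset.sum_apply']
  rw [Finset.sum_eq_single g']
  · simp [MonoidAlgebra.coeff_single, Finsupp.single_apply]
  · intro b _ hb
    simp [MonoidAlgebra.coeff_single, Finsupp.single_apply, hb]
  · simp

lemma single_one_smul_eq (c : k) (x : M) :
    (MonoidAlgebra.single (1 : G) c : MonoidAlgebra k G) • x = c • x := by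
  have h : (MonoidAlgebra.single (1 : G) c : MonoidAlgebra k G) =
      algebraMap k (MonoidAlgebra k G) c := by
    simp [MonoidAlgebra.coe_algebraMap]
  rw [h, algebraMap_smul]

lemma extend_one (ι : P →ₗ[MonoidAlgebra k G] M) (hι : Function.Injective ι)
    (e : P →ₗ[MonoidAlgebra k G] MonoidAlgebra k G) :
    ∃ E : M →ₗ[MonoidAlgebra k G] MonoidAlgebra k G, E.comp ι = e := by
  classical
  haveI : SMulCommClass k (MonoidAlgebra k G) M := IsScalarTower.to_smulCommClass
  set R := MonoidAlgebra k G with hR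
  -- evaluation at 1 as a k-linear functional on R
  let lam : R →ₗ[k] k :=
    { toFun := fun a => a.coeff 1
      map_add' := fun a b => rfl
      map_smul' := fun c a => rfl }
  -- range ι as a k-subspace
  let S : Submodule k M := (LinearMap.range ι).restrictScalars k
  let equiv := LinearEquiv.ofInjective ι hι
  -- the k-linear functional on S
  let em : (LinearMap.range ι) →ₗ[R] R := e.comp (equiv.symm : LinearMap.range ι →ₗ[R] P)
  let βS : S →ₗ[k] k :=
    (lam.comp (em.restrictScalars k)).comp
      ((Submodule.restrictScalarsEquiv k R M (LinearMap.range ι)).restrictScalars k :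
        S →ₗ[k] (LinearMap.range ι))
  -- extend βS to all of M using a complement
  obtain ⟨q, hq⟩ := Submodule.exists_isCompl S
  let pr : M →ₗ[k] S := S.linearProjOfIsCompl q hq
  let β : M →ₗ[k] k := βS.comp pr
  have hβ : ∀ p : P, β (ι p) = (e p).coeff 1 := by
    intro p
    have hmem : ι p ∈ S := ⟨p, rfl⟩
    have h1 : pr (ι p) = ⟨ι p, hmem⟩ :=
      Submodule.linearProjOfIsCompl_apply_left hq ⟨ι p, hmem⟩
    have h2 : equiv.symm ⟨ι p, ⟨p, rfl⟩⟩ = p := by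
      apply hι
      rw [LinearEquiv.ofInjective_symm_apply]
    simp only [β, LinearMap.comp_apply, h1, βS, LinearMap.restrictScalars_apply,
      LinearEquiv.restrictScalars_apply]
    show lam (em ((Submodule.restrictScalarsEquiv k R M (LinearMap.range ι)) ⟨ι p, hmem⟩)) = _
    have h3 : (Submodule.restrictScalarsEquiv k R M (LinearMap.range ι)) ⟨ι p, hmem⟩
        = ⟨ι p, ⟨p, rfl⟩⟩ := rfl
    rw [h3]
    show lam (e (equiv.symm ⟨ι p, ⟨p, rfl⟩⟩)) = (e p).coeff 1
    rw [h2]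
    rfl
  -- the candidate extension as a raw function
  let F : M → R := fun x => ∑ g : G, MonoidAlgebra.single g
      (β ((MonoidAlgebra.single (g⁻¹ : G) (1:k) : R) • x))
  have Fadd : ∀ x y : M, F (x + y) = F x + F y := by
    intro x y
    simp only [F, smul_add, map_add]
    rw [← Finset.sum_add_distrib]
    congr 1
    funext g
    exact MonoidAlgebra.single_add g _ _
  have Fk : ∀ (c : k) (x : M), F (c • x) = c • F x := by
    intro c x
    simp only [F, Finset.smul_sum]
    congr 1; ext g
    rw [smul_comm, map_smul, MonoidAlgebra.smul_single']
    rfl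
  have Fof : ∀ (h : G) (x : M), F ((MonoidAlgebra.single h (1:k) : R) • x)
      = (MonoidAlgebra.single h (1:k) : R) * F x := by
    intro h x
    simp only [F, Finset.mul_sum, smul_smul, MonoidAlgebra.single_mul_single, one_mul]
    refine Fintype.sum_bijective (fun g => h⁻¹ * g)
      (Group.mulLeft_bijective h⁻¹) _ _ ?_
    intro g
    simp only [mul_inv_cancel_left, mul_inv_rev, inv_inv]
  have key : ∀ (r : R) (x : M), F (r • x) = r * F x := by
    intro r
    induction r using MonoidAlgebra.induction_on with
    | of h => intro x; exact Fof h x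
    | add a b ha hb =>
        intro x
        rw [add_smul, Fadd, ha, hb, add_mul]
    | smul c r hr =>
        intro x
        rw [smul_assoc, Fk, hr, smul_mul_assoc]
  let E : M →ₗ[R] R :=
    { toFun := F
      map_add' := Fadd
      map_smul' := fun r x => key r x }
  refine ⟨E, LinearMap.ext fun p => ?_⟩
  show F (ι p) = e p
  have : ∀ g : G, (MonoidAlgebra.single (g⁻¹ : G) (1:k) : R) • ι p
      = ι ((MonoidAlgebra.single (g⁻¹ : G) (1:k) : R) • p) :=
    fun g => (map_smul ι _ _).symm
  simp only [F, this, hβ]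
  have h4 : ∀ g : G, (e ((MonoidAlgebra.single (g⁻¹ : G) (1:k) : R) • p)).coeff 1 = (e p).coeff g := by
    intro g
    rw [map_smul, smul_eq_mul, MonoidAlgebra.coeff_single_mul_apply, one_mul, inv_inv, mul_one]
  simp only [h4]
  exact sum_single_apply_eq (e p)

lemma extend_free (t : ℕ) (ι : P →ₗ[MonoidAlgebra k G] M) (hι : Function.Injective ι)
    (e : P →ₗ[MonoidAlgebra k G] (Fin t → MonoidAlgebra k G)) :
    ∃ E : M →ₗ[MonoidAlgebra k G] (Fin t → MonoidAlgebra k G), E.comp ι = e := by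
  choose E hE using fun i : Fin t =>
    extend_one ι hι ((LinearMap.proj i).comp e)
  refine ⟨LinearMap.pi E, LinearMap.ext fun p => funext fun i => ?_⟩
  have := LinearMap.congr_fun (hE i) p
  simpa using this

end Ext


/-- if `f : M → A'` and `g : A' → B` are ghosts between finite-dimensional
modules and `M` sits in a short exact sequence `0 → P → M → Q → 0` with `P` and `Q`
finite direct sums of Heller shifts `Ω̃^{d} k` of the trivial module, then `g ∘ f` is
stably trivial. -/
theorem stmt18 (p : ℕ) [Fact p.Prime] (k : Type) [Field k] [CharP k p]
    (G : Type) [Group G] [Fintype G] (hG : IsPGroup p G)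
    (M A' B : Type) [AddCommGroup M] [AddCommGroup A'] [AddCommGroup B]
    [Module (MonoidAlgebra k G) M] [Module (MonoidAlgebra k G) A']
    [Module (MonoidAlgebra k G) B]
    [Module k M] [IsScalarTower k (MonoidAlgebra k G) M] [FiniteDimensional k M]
    [Module k A'] [IsScalarTower k (MonoidAlgebra k G) A'] [FiniteDimensional k A']
    [Module k B] [IsScalarTower k (MonoidAlgebra k G) B] [FiniteDimensional k B]
    (f : M →ₗ[MonoidAlgebra k G] A') (g : A' →ₗ[MonoidAlgebra k G] B)
    (hf : IsGhost k G f) (hg : IsGhost k G g)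
    -- `P = Π i, K i` is a finite direct sum of suspensions of `k`
    (m : ℕ) (K : Fin m → Type) [∀ i, AddCommGroup (K i)]
    [∀ i, Module (MonoidAlgebra k G) (K i)] (dK : Fin m → ℤ)
    (hK : ∀ i, IsSuspensionOfTrivial k G (dK i) (K i))
    -- `Q = Π j, L j` is a finite direct sum of suspensions of `k`
    (n : ℕ) (L : Fin n → Type) [∀ j, AddCommGroup (L j)]
    [∀ j, Module (MonoidAlgebra k G) (L j)] (dL : Fin n → ℤ)
    (hL : ∀ j, IsSuspensionOfTrivial k G (dL j) (L j))
    -- the short exact sequence `0 → P → M → Q → 0`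
    (ι : (∀ i, K i) →ₗ[MonoidAlgebra k G] M)
    (π : M →ₗ[MonoidAlgebra k G] (∀ j, L j))
    (hι : Function.Injective ι) (hπ : Function.Surjective π)
    (hexact : LinearMap.range ι = LinearMap.ker π) :
    StablyTrivial (MonoidAlgebra k G) (g.comp f) := by
  classical
  -- Step 1: f ∘ ι is stably trivial, since f is a ghost and P is a sum of suspensions
  have h1 : StablyTrivial (MonoidAlgebra k G) (f.comp ι) := by
    apply st_from_pi
    intro i
    have := hf (dK i) (K i) (hK i) (ι.comp (LinearMap.single (MonoidAlgebra k G) K i))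
    rwa [← LinearMap.comp_assoc] at this
  obtain ⟨t, e, h, he⟩ := h1
  -- Step 2: extend e : P → F along ι using self-injectivity of the group algebra
  obtain ⟨E, hE⟩ := extend_free t ι hι e
  -- Step 3: f - h ∘ E kills range ι = ker π, so it factors through π
  have hDk : LinearMap.ker π ≤ LinearMap.ker (f - h.comp E) := by
    rw [← hexact]
    rintro x ⟨y, rfl⟩
    have h2 := LinearMap.congr_fun hE y
    have h3 := LinearMap.congr_fun he y
    simp only [LinearMap.comp_apply] at h2 h3
    simp only [LinearMap.mem_ker, LinearMap.sub_apply, LinearMap.comp_apply, h2, h3, sub_self]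
  obtain ⟨f'', hf''⟩ := factor_through_surjective π hπ (f - h.comp E) hDk
  have hfsplit : f = f''.comp π + h.comp E := by
    rw [hf'']
    abel
  have hsplit : g.comp f = g.comp (f''.comp π) + g.comp (h.comp E) := by
    rw [hfsplit, LinearMap.comp_add]
  rw [hsplit]
  apply st_add
  · -- g ∘ f'' is stably trivial since g is a ghost and Q is a sum of suspensions
    rw [← LinearMap.comp_assoc]
    apply st_comp_right _ π
    apply st_from_pi
    intro j
    have := hg (dL j) (L j) (hL j) (f''.comp (LinearMap.single (MonoidAlgebra k G) L j))
    rwa [← LinearMap.comp_assoc] at this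
  · -- g ∘ h ∘ E factors through the free module F
    exact ⟨t, E, (g.comp h), by rw [LinearMap.comp_assoc]⟩
end

section
/- Let k be a field of characteristic 2 and G = C_2 ⊕ C_2 ⊕ ⋯ ⊕ C_2 an elementary abelian 2-group of rank l. Writing kG ≅ k[x_1,…,x_l]/(x_1^2,…,x_l^2), the element θ = x_1 x_2 ⋯ x_{l-1} (product of l-1 of the generators of the radical) acts stably non-trivially on the induced module k_H↑^G, where H is the subgroup generated by the last coordinate; i.e., multiplication by θ on k_H↑^G does not factor through a projective kG-module. -/
/-- The elementary abelian 2-group of rank `l`. -/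
abbrev EAG (l : ℕ) : Type := Fin l → Multiplicative (ZMod 2)

/-- The `i`-th standard generator of `(C_2)^l`. -/
def eagGen (l : ℕ) (i : Fin l) : EAG l := Pi.mulSingle i (Multiplicative.ofAdd 1)

section basic
variable {l : ℕ}

lemma eag_mul_self (x : EAG l) : x * x = 1 := by
  funext j
  have : ∀ a : Multiplicative (ZMod 2), a * a = 1 := by decide
  exact this (x j)

lemma eag_inv (x : EAG l) : x⁻¹ = x :=
  inv_eq_of_mul_eq_one_right (eag_mul_self x)

lemma mem_zpowers_eag {g x : EAG l} (hx : x ∈ Subgroup.zpowers g) : x = 1 ∨ x = g := by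
  obtain ⟨n, hn⟩ := Subgroup.mem_zpowers_iff.mp hx
  have h2 : g ^ (2 : ℤ) = 1 := by
    rw [show (2:ℤ) = 1 + 1 by ring, zpow_add, zpow_one]
    exact eag_mul_self g
  rcases Int.even_or_odd n with ⟨m, hm⟩ | ⟨m, hm⟩
  · left; rw [← hn, hm, ← two_mul, zpow_mul, h2, one_zpow]
  · right; rw [← hn, hm, zpow_add, zpow_mul, h2, one_zpow, one_mul, zpow_one]

end basic

variable {k : Type} [Field k] [CharP k 2] {l : ℕ}

open MonoidAlgebra Multiplicative

lemma mzmod2_eq_of_ne {a : Multiplicative (ZMod 2)} (h : a ≠ 1) : a = ofAdd 1 := by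
  revert h; revert a; decide

lemma ann_lemma (idx : Fin l) (a : MonoidAlgebra k (EAG l))
    (ha : MonoidAlgebra.single (Pi.mulSingle idx (ofAdd (1:ZMod 2))) (1:k) * a = a) :
    ∃ w, (MonoidAlgebra.single (Pi.mulSingle idx (ofAdd (1:ZMod 2))) (1:k) - 1) * w = a := by
  classical
  set gH : EAG l := Pi.mulSingle idx (ofAdd (1:ZMod 2)) with hgH
  have hginv : gH⁻¹ = gH := eag_inv gH
  refine ⟨MonoidAlgebra.ofCoeff (Finsupp.filter (fun x : EAG l => x idx = 1) a.coeff), ?_⟩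
  ext h
  rw [sub_mul, one_mul, MonoidAlgebra.coeff_sub, Finsupp.sub_apply, MonoidAlgebra.single_mul_apply, one_mul, hginv,
    MonoidAlgebra.coeff_ofCoeff]
  have hgmul : (gH * h) idx = ofAdd 1 * h idx := by
    rw [Pi.mul_apply, hgH, Pi.mulSingle_eq_same]
  by_cases hh : h idx = 1
  · have h1 : (gH * h) idx ≠ 1 := by rw [hgmul, hh, mul_one]; decide
    rw [Finsupp.filter_apply, Finsupp.filter_apply, if_neg h1, if_pos hh, zero_sub,
      CharTwo.neg_eq]
  · have h1 : (gH * h) idx = 1 := by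
      rw [hgmul, mzmod2_eq_of_ne hh]
      show ofAdd (1:ZMod 2) * ofAdd (1:ZMod 2) = 1
      decide
    have ha' : a.coeff (gH * h) = a.coeff h := by
      have : (MonoidAlgebra.single gH (1:k) * a).coeff h = a.coeff h := by rw [ha]
      rwa [MonoidAlgebra.single_mul_apply, one_mul, hginv] at this
    rw [Finsupp.filter_apply, Finsupp.filter_apply, if_pos h1, if_neg hh, ha', sub_zero]

section modlem
variable (k : Type) [Field k] [CharP k 2]

lemma gH_smul {G : Type} [CommGroup G] (H : Subgroup G) (gh : G) (hgh : gh ∈ H)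
    (m : IndTriv k G H) : MonoidAlgebra.of k G gh • m = m := by
  apply (Representation.ofMulAction k G (G ⧸ H)).asModuleEquiv.injective
  change (Representation.ofMulAction k G (G ⧸ H)).asAlgebraHom (MonoidAlgebra.of k G gh)
    ((Representation.ofMulAction k G (G ⧸ H)).asModuleEquiv m) = _
  rw [Representation.asAlgebraHom_of]
  set m' := (Representation.ofMulAction k G (G ⧸ H)).asModuleEquiv m
  have hid : (fun q : G ⧸ H => gh • q) = id := by
    funext q
    induction q using QuotientGroup.induction_on with
    | H x =>
      show ((gh * x : G) : G ⧸ H) = (x : G ⧸ H)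
      rw [QuotientGroup.eq]
      have : (gh * x)⁻¹ * x = gh⁻¹ := by
        rw [mul_inv_rev, mul_comm x⁻¹ gh⁻¹, mul_assoc, inv_mul_cancel, mul_one]
      rw [this]; exact H.inv_mem hgh
  rw [Representation.ofMulAction_def, hid, Finsupp.lmapDomain_id]
  simp

lemma x_kills {G : Type} [CommGroup G] (H : Subgroup G) (gh : G) (hgh : gh ∈ H)
    (m : IndTriv k G H) : (MonoidAlgebra.of k G gh - 1) • m = 0 := by
  rw [sub_smul, one_smul, gH_smul k H gh hgh, sub_self]

end modlem

lemma expand_lemma (k : Type) [Field k] [CharP k 2] (l : ℕ) (H : Subgroup (EAG l))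
    (s : Finset (Fin (l - 1))) :
    (Representation.ofMulAction k (EAG l) (EAG l ⧸ H)).asAlgebraHom
        (∏ i ∈ s, (MonoidAlgebra.of k (EAG l) (eagGen l (Fin.castLE (Nat.sub_le l 1) i)) - 1))
        (MonoidAlgebra.single (1 : EAG l ⧸ H) 1)
      = ∑ S ∈ s.powerset,
          MonoidAlgebra.single
            ((↑(∏ i ∈ S, eagGen l (Fin.castLE (Nat.sub_le l 1) i)) : EAG l ⧸ H)) (1 : k) := by
  classical
  have hneg : ∀ f : MonoidAlgebra k (EAG l ⧸ H), -f = f := by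
    intro f; ext q; rw [MonoidAlgebra.coeff_neg, Finsupp.neg_apply, CharTwo.neg_eq]
  induction s using Finset.induction_on with
  | empty => simp
  | @insert a s ha ih =>
    rw [Finset.prod_insert ha, map_mul, Module.End.mul_apply, ih, map_sub, map_one,
      Representation.asAlgebraHom_of, Finset.sum_powerset_insert ha,
      LinearMap.sub_apply, Module.End.one_apply, map_sum]
    have h1 : ∀ S ∈ s.powerset,
        (Representation.ofMulAction k (EAG l) (EAG l ⧸ H))
            (eagGen l (Fin.castLE (Nat.sub_le l 1) a))
            (MonoidAlgebra.single ((↑(∏ i ∈ S, eagGen l (Fin.castLE (Nat.sub_le l 1) i)) : EAG l ⧸ H)) (1:k))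
          = MonoidAlgebra.single
            ((↑(∏ i ∈ insert a S, eagGen l (Fin.castLE (Nat.sub_le l 1) i)) : EAG l ⧸ H)) (1:k) := by
      intro S hS
      have haS : a ∉ S := fun hc => ha (Finset.mem_powerset.mp hS hc)
      rw [Representation.ofMulAction_single, Finset.prod_insert haS]
      rfl
    rw [Finset.sum_congr rfl h1, sub_eq_add_neg, hneg, add_comm]

lemma gen_apply (l : ℕ) (i j : Fin (l - 1)) :
    eagGen l (Fin.castLE (Nat.sub_le l 1) i) (Fin.castLE (Nat.sub_le l 1) j)
      = if i = j then Multiplicative.ofAdd (1 : ZMod 2) else 1 := by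
  unfold eagGen
  rcases eq_or_ne i j with rfl | hij
  · rw [if_pos rfl, Pi.mulSingle_eq_same]
  · rw [if_neg hij]
    apply Pi.mulSingle_eq_of_ne
    intro hc
    apply hij
    have h2 := congrArg Fin.val hc
    simp only [Fin.coe_castLE] at h2
    exact (Fin.ext h2).symm

lemma prod_gen_apply (l : ℕ) (s : Finset (Fin (l - 1))) (j : Fin (l - 1)) :
    (∏ i ∈ s, eagGen l (Fin.castLE (Nat.sub_le l 1) i)) (Fin.castLE (Nat.sub_le l 1) j)
      = if j ∈ s then Multiplicative.ofAdd (1 : ZMod 2) else 1 := by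
  classical
  rw [Finset.prod_apply]
  rw [Finset.prod_congr rfl (fun i _ => gen_apply l i j),
    Finset.prod_ite_eq' s j (fun _ => Multiplicative.ofAdd (1 : ZMod 2))]

lemma gH_apply (l : ℕ) (hl : 0 < l) (j : Fin (l - 1)) :
    eagGen l ⟨l - 1, Nat.sub_lt hl one_pos⟩ (Fin.castLE (Nat.sub_le l 1) j) = 1 := by
  unfold eagGen
  apply Pi.mulSingle_eq_of_ne
  intro hc
  have := congrArg Fin.val hc
  simp only [Fin.coe_castLE] at this
  exact absurd this (Nat.ne_of_lt j.isLt)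

lemma sum_ne_zero (k : Type) [Field k] [CharP k 2] (l : ℕ) (hl : 0 < l) :
    (∑ S ∈ (Finset.univ : Finset (Fin (l - 1))).powerset,
      MonoidAlgebra.single
        ((↑(∏ i ∈ S, eagGen l (Fin.castLE (Nat.sub_le l 1) i)) :
          EAG l ⧸ Subgroup.zpowers (eagGen l ⟨l - 1, Nat.sub_lt hl one_pos⟩))) (1 : k)) ≠ 0 := by
  classical
  intro h0
  set c : EAG l ⧸ Subgroup.zpowers (eagGen l ⟨l - 1, Nat.sub_lt hl one_pos⟩) :=
    ↑(∏ i ∈ Finset.univ, eagGen l (Fin.castLE (Nat.sub_le l 1) i)) with hc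
  have hev := congrArg (fun f : MonoidAlgebra k (EAG l ⧸ _) => f.coeff c) h0
  simp only [MonoidAlgebra.coeff_sum, MonoidAlgebra.coeff_single, MonoidAlgebra.coeff_zero,
    Finsupp.finset_sum_apply, Finsupp.coe_zero, Pi.zero_apply] at hev
  rw [Finset.sum_eq_single_of_mem Finset.univ (Finset.mem_powerset_self _)] at hev
  · rw [hc, Finsupp.single_eq_same] at hev
    exact one_ne_zero hev
  · intro S _ hS
    rw [Finsupp.single_apply, if_neg]
    intro heq
    rw [hc, QuotientGroup.eq] at heq
    obtain ⟨j, hj⟩ : ∃ j, j ∉ S := by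
      by_contra hc2; push_neg at hc2; exact hS (Finset.eq_univ_iff_forall.mpr hc2)
    have key : ((∏ i ∈ S, eagGen l (Fin.castLE (Nat.sub_le l 1) i))⁻¹ *
        ∏ i ∈ Finset.univ, eagGen l (Fin.castLE (Nat.sub_le l 1) i))
          (Fin.castLE (Nat.sub_le l 1) j) = Multiplicative.ofAdd (1 : ZMod 2) := by
      rw [eag_inv, Pi.mul_apply, prod_gen_apply, prod_gen_apply, if_neg hj,
        if_pos (Finset.mem_univ j), one_mul]
    rcases mem_zpowers_eag heq with h | h
    · have h2 := congrFun h (Fin.castLE (Nat.sub_le l 1) j)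
      rw [key, Pi.one_apply] at h2
      exact absurd h2 (by decide)
    · have h2 := congrFun h (Fin.castLE (Nat.sub_le l 1) j)
      rw [key, gH_apply l hl j] at h2
      exact absurd h2 (by decide)


/-- for `G = (C_2)^l` with `kG ≅ k[x_1,…,x_l]/(x_i^2)`, the element
`θ = x_1 ⋯ x_{l-1}` acts stably non-trivially on `k_H↑^G`, where `H` is generated by
the last coordinate. -/
theorem stmt19 (k : Type) [Field k] [CharP k 2] (l : ℕ) (hl : 0 < l) :
    ¬ StablyTrivial (MonoidAlgebra k (EAG l))
        (mulBy (MonoidAlgebra k (EAG l))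
          (IndTriv k (EAG l) (Subgroup.zpowers (eagGen l ⟨l - 1, Nat.sub_lt hl one_pos⟩)))
          (∏ i : Fin (l - 1),
            (MonoidAlgebra.of k (EAG l) (eagGen l (Fin.castLE (Nat.sub_le l 1) i)) - 1))
          (fun b => mul_comm _ b)) := by
  classical
  set gH : EAG l := eagGen l ⟨l - 1, Nat.sub_lt hl one_pos⟩ with hgHdef
  set H : Subgroup (EAG l) := Subgroup.zpowers gH with hHdef
  set θ : MonoidAlgebra k (EAG l) :=
    ∏ i : Fin (l - 1),
      (MonoidAlgebra.of k (EAG l) (eagGen l (Fin.castLE (Nat.sub_le l 1) i)) - 1) with hθdef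
  rintro ⟨t, gmap, hmap, hcomp⟩
  set e := (Representation.ofMulAction k (EAG l) (EAG l ⧸ H)).asModuleEquiv with hedef
  set m₀ : IndTriv k (EAG l) H := e.symm (MonoidAlgebra.single (1 : EAG l ⧸ H) 1) with hm0
  have happ : hmap (gmap m₀) = θ • m₀ := DFunLike.congr_fun hcomp m₀
  have hsm : MonoidAlgebra.of k (EAG l) gH • gmap m₀ = gmap m₀ := by
    rw [← map_smul, gH_smul k H gH (Subgroup.mem_zpowers gH)]
  have hann : ∀ i, ∃ w, (MonoidAlgebra.single gH (1 : k) - 1) * w = gmap m₀ i := by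
    intro i
    apply ann_lemma ⟨l - 1, Nat.sub_lt hl one_pos⟩
    have h2 := congrFun hsm i
    rw [Pi.smul_apply, smul_eq_mul, MonoidAlgebra.of_apply] at h2
    exact h2
  choose w hw using hann
  have hgm : gmap m₀ = (MonoidAlgebra.of k (EAG l) gH - 1) • w := by
    funext i
    rw [Pi.smul_apply, smul_eq_mul, MonoidAlgebra.of_apply, hw i]
  have hz : θ • m₀ = 0 := by
    rw [← happ, hgm, map_smul, x_kills k H gH (Subgroup.mem_zpowers gH)]
  have hkey : (Representation.ofMulAction k (EAG l) (EAG l ⧸ H)).asAlgebraHom θ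
      (MonoidAlgebra.single (1 : EAG l ⧸ H) 1) = 0 := by
    have h2 : e (θ • m₀) = 0 := by rw [hz]; rfl
    exact h2
  rw [hθdef, expand_lemma k l H Finset.univ] at hkey
  exact sum_ne_zero k l hl hkey
end
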